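/- With β ≤ γ, βγ > 1, d ≥ Δ_c real, and x_i(d) (i = 0,1) the roots of (βx+1)(x+γ) = d(βγ−1)x, define g_i(d) = x_i(d)·((x_i(d)+γ)/(βx_i(d)+1))^d. Then the logarithmic derivative satisfies g_i'(d)/g_i(d) = log((x_i(d)+γ)/(βx_i(d)+1)). In particular, if β ≤ 1 then both g₀ and g₁ are increasing in d. -/
import Mathlib

open Real Filter Set Topology

theorem stmt_11 (β γ : ℝ) (hβ : 0 < β) (hγ : 0 < γ) (h1 : 1 < β * γ) (hle : β ≤ γ)
    (X : ℝ → ℝ)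
    (hXpos : ∀ d ∈ Set.Ioi ((Real.sqrt (β * γ) + 1) / (Real.sqrt (β * γ) - 1)), 0 < X d)
    (hroot : ∀ d ∈ Set.Ioi ((Real.sqrt (β * γ) + 1) / (Real.sqrt (β * γ) - 1)),
      (β * X d + 1) * (X d + γ) = d * (β * γ - 1) * X d)
    (hXdiff : ∀ d ∈ Set.Ioi ((Real.sqrt (β * γ) + 1) / (Real.sqrt (β * γ) - 1)),
      DifferentiableAt ℝ X d) :
    (∀ d ∈ Set.Ioi ((Real.sqrt (β * γ) + 1) / (Real.sqrt (β * γ) - 1)),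
      deriv (fun e : ℝ => X e * ((X e + γ) / (β * X e + 1)) ^ e) d =
        (X d * ((X d + γ) / (β * X d + 1)) ^ d) *
          Real.log ((X d + γ) / (β * X d + 1))) ∧
    (β ≤ 1 →
      StrictMonoOn (fun e : ℝ => X e * ((X e + γ) / (β * X e + 1)) ^ e)
        (Set.Ioi ((Real.sqrt (β * γ) + 1) / (Real.sqrt (β * γ) - 1)))) := by
  set Δ := (Real.sqrt (β * γ) + 1) / (Real.sqrt (β * γ) - 1) with hΔdef
  have key : ∀ d ∈ Set.Ioi Δ,
      HasDerivAt (fun e : ℝ => X e * ((X e + γ) / (β * X e + 1)) ^ e)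
        ((X d * ((X d + γ) / (β * X d + 1)) ^ d) *
          Real.log ((X d + γ) / (β * X d + 1))) d := by
    intro d hd
    have hX : 0 < X d := hXpos d hd
    have hA : 0 < X d + γ := by linarith
    have hB : 0 < β * X d + 1 := by positivity
    have hu : HasDerivAt X (deriv X d) d := (hXdiff d hd).hasDerivAt
    set u' := deriv X d with hu'
    have hAc : Filter.Tendsto (fun e => X e + γ) (𝓝 d) (𝓝 (X d + γ)) :=
      hu.continuousAt.add continuousAt_const
    have hBc : Filter.Tendsto (fun e => β * X e + 1) (𝓝 d) (𝓝 (β * X d + 1)) :=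
      (hu.continuousAt.const_mul β).add continuousAt_const
    have hAe : ∀ᶠ e in 𝓝 d, 0 < X e + γ := hAc.eventually (eventually_gt_nhds hA)
    have hBe : ∀ᶠ e in 𝓝 d, 0 < β * X e + 1 := hBc.eventually (eventually_gt_nhds hB)
    have heq : (fun e : ℝ => X e * ((X e + γ) / (β * X e + 1)) ^ e) =ᶠ[𝓝 d]
        (fun e : ℝ => X e *
          Real.exp (e * (Real.log (X e + γ) - Real.log (β * X e + 1)))) := by
      filter_upwards [hAe, hBe] with e hAe' hBe'
      rw [Real.rpow_def_of_pos (div_pos hAe' hBe'), Real.log_div hAe'.ne' hBe'.ne']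
      ring
    have h1' : HasDerivAt (fun e => Real.log (X e + γ)) (u' / (X d + γ)) d :=
      (hu.add_const γ).log hA.ne'
    have h2' : HasDerivAt (fun e => Real.log (β * X e + 1)) (β * u' / (β * X d + 1)) d :=
      ((hu.const_mul β).add_const 1).log hB.ne'
    have hL := h1'.sub h2'
    have hm : HasDerivAt
        (fun e => e * (Real.log (X e + γ) - Real.log (β * X e + 1)))
        (1 * (Real.log (X d + γ) - Real.log (β * X d + 1)) +
          d * (u' / (X d + γ) - β * u' / (β * X d + 1))) d :=
      (hasDerivAt_id d).mul hL
    have hexp := hm.exp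
    have hfull := hu.mul hexp
    have hg := hfull.congr_of_eventuallyEq heq
    have hcalc : X d * (d * (u' / (X d + γ) - β * u' / (β * X d + 1))) = -u' := by
      have hr0 := hroot d hd
      field_simp
      linear_combination u' * hr0
    have hval : ((X d * ((X d + γ) / (β * X d + 1)) ^ d) *
          Real.log ((X d + γ) / (β * X d + 1))) =
        u' * Real.exp (d * (Real.log (X d + γ) - Real.log (β * X d + 1))) +
          X d * (Real.exp (d * (Real.log (X d + γ) - Real.log (β * X d + 1))) *
            (1 * (Real.log (X d + γ) - Real.log (β * X d + 1)) +
              d * (u' / (X d + γ) - β * u' / (β * X d + 1)))) := by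
      rw [Real.rpow_def_of_pos (div_pos hA hB), Real.log_div hA.ne' hB.ne',
        mul_comm (Real.log (X d + γ) - Real.log (β * X d + 1)) d]
      set E := Real.exp (d * (Real.log (X d + γ) - Real.log (β * X d + 1)))
      linear_combination (-E) * hcalc
    rw [hval]
    exact hg
  refine ⟨fun d hd => (key d hd).deriv, fun hβ1 => ?_⟩
  apply strictMonoOn_of_deriv_pos (convex_Ioi Δ)
  · exact fun x hx => (key x hx).continuousAt.continuousWithinAt
  · intro x hx
    rw [interior_Ioi] at hx
    rw [(key x hx).deriv]
    have hX : 0 < X x := hXpos x hx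
    have hA : 0 < X x + γ := by linarith
    have hB : 0 < β * X x + 1 := by positivity
    have hγ1 : 1 < γ := by nlinarith
    have hr1 : 1 < (X x + γ) / (β * X x + 1) := by
      rw [lt_div_iff₀ hB]
      nlinarith [mul_nonneg (sub_nonneg.2 hβ1) hX.le]
    have hlog : 0 < Real.log ((X x + γ) / (β * X x + 1)) := Real.log_pos hr1
    have hpow : 0 < ((X x + γ) / (β * X x + 1)) ^ x :=
      Real.rpow_pos_of_pos (div_pos hA hB) x
    exact mul_pos (mul_pos hX hpow) hlog
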